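/- arXiv:2111.06346 — 4 statements merged into one kernel-verified Lean document; each statement's English description precedes it below -/
import Mathlib

section
/- Let U and V be nonzero subspaces of a finite-dimensional real inner product space, let P_V be the orthogonal projection onto V, and let cos θ₁ = sup{⟨u, v⟩ : u ∈ U, v ∈ V, ‖u‖ = ‖v‖ = 1} be the cosine of the minimal principal angle between U and V. Then for every ρ > 0, the infimum of ‖a − P_V a‖² over all a ∈ U with ‖a‖ = ρ equals ρ² (1 − cos² θ₁) = ρ² sin² θ₁. -/
open scoped RealInnerProductSpace

/-- For nonzero subspaces `U, V` of a finite-dimensional real inner product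
space, with `cos θ₁ = sup{⟪u,v⟫ : u ∈ U, v ∈ V, ‖u‖ = ‖v‖ = 1}`, and every `ρ > 0`:
the infimum of `‖a − P_V a‖²` over `a ∈ U` with `‖a‖ = ρ` equals `ρ²(1 − cos²θ₁)`. -/
theorem weakest_point_inf (E : Type*) [NormedAddCommGroup E] [InnerProductSpace ℝ E]
    [FiniteDimensional ℝ E] (U V : Submodule ℝ E) (hU : U ≠ ⊥) (hV : V ≠ ⊥)
    (c : ℝ)
    (hc : c = sSup {x : ℝ | ∃ u ∈ U, ∃ v ∈ V, ‖u‖ = 1 ∧ ‖v‖ = 1 ∧ ⟪u, v⟫ = x})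
    (ρ : ℝ) (hρ : 0 < ρ) :
    sInf {y : ℝ | ∃ a ∈ U, ‖a‖ = ρ ∧ y = ‖a - (V.orthogonalProjection a : E)‖ ^ 2}
      = ρ ^ 2 * (1 - c ^ 2) := by
  classical
  set T : Set ℝ := {x : ℝ | ∃ u ∈ U, ∃ v ∈ V, ‖u‖ = 1 ∧ ‖v‖ = 1 ∧ ⟪u, v⟫ = x} with hTdef
  -- T is the image of a compact set under a continuous map
  have hTimg : T = (fun p : E × E => ⟪p.1, p.2⟫) ''
      ((Metric.sphere 0 1 ∩ (U : Set E)) ×ˢ (Metric.sphere 0 1 ∩ (V : Set E))) := by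
    ext x
    constructor
    · rintro ⟨u, hu, v, hv, hu1, hv1, hx⟩
      exact ⟨(u, v), ⟨⟨by simpa using hu1, hu⟩, ⟨by simpa using hv1, hv⟩⟩, hx⟩
    · rintro ⟨⟨u, v⟩, ⟨⟨hu1, hu⟩, hv1, hv⟩, hx⟩
      exact ⟨u, hu, v, hv, by simpa using hu1, by simpa using hv1, hx⟩
  have hTcompact : IsCompact T := by
    rw [hTimg]
    exact ((((isCompact_sphere (0:E) 1).inter_right U.closed_of_finiteDimensional).prod
      ((isCompact_sphere (0:E) 1).inter_right V.closed_of_finiteDimensional)).image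
      continuous_inner)
  -- T is nonempty
  obtain ⟨u', hu'U, hu'0⟩ := Submodule.exists_mem_ne_zero_of_ne_bot hU
  obtain ⟨v', hv'V, hv'0⟩ := Submodule.exists_mem_ne_zero_of_ne_bot hV
  have hnu : ‖(‖u'‖⁻¹ • u' : E)‖ = 1 := by
    rw [norm_smul, norm_inv, norm_norm, inv_mul_cancel₀ (norm_ne_zero_iff.mpr hu'0)]
  have hnv : ‖(‖v'‖⁻¹ • v' : E)‖ = 1 := by
    rw [norm_smul, norm_inv, norm_norm, inv_mul_cancel₀ (norm_ne_zero_iff.mpr hv'0)]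
  have hTne : T.Nonempty :=
    ⟨_, ‖u'‖⁻¹ • u', U.smul_mem _ hu'U, ‖v'‖⁻¹ • v', V.smul_mem _ hv'V, hnu, hnv, rfl⟩
  have hTbdd : BddAbove T := hTcompact.bddAbove
  have hcT : c ∈ T := hc ▸ hTcompact.sSup_mem hTne
  obtain ⟨u₀, hu₀U, v₀, hv₀V, hu₀1, hv₀1, hcv⟩ := hcT
  have hle : ∀ x ∈ T, x ≤ c := fun x hx => hc ▸ le_csSup hTbdd hx
  -- c ≥ 0
  have hc0 : 0 ≤ c := by
    have hneg : (-c) ∈ T := by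
      refine ⟨-u₀, U.neg_mem hu₀U, v₀, hv₀V, by simpa using hu₀1, hv₀1, ?_⟩
      rw [inner_neg_left, hcv]
    have := hle _ hneg
    linarith
  -- Pythagoras-type identity
  have pyth : ∀ a : E, ⟪a, (V.orthogonalProjection a : E)⟫ =
      ‖(V.orthogonalProjection a : E)‖ ^ 2 := by
    intro a
    set p : E := (V.orthogonalProjection a : E) with hp
    have hmem : a - p ∈ Vᗮ := Submodule.sub_starProjection_mem_orthogonal (K := V) a
    have h0 : ⟪p, a - p⟫ = 0 :=
      (Submodule.mem_orthogonal V (a - p)).mp hmem p (V.orthogonalProjection a).2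
    have h1 : ⟪p, a⟫ = ⟪p, p⟫ := by
      have := h0
      rw [inner_sub_right] at this
      linarith
    rw [real_inner_comm, h1, real_inner_self_eq_norm_sq]
  have normsub : ∀ a : E, ‖a - (V.orthogonalProjection a : E)‖ ^ 2 =
      ‖a‖ ^ 2 - ‖(V.orthogonalProjection a : E)‖ ^ 2 := by
    intro a
    have h := norm_sub_sq_real a (V.orthogonalProjection a : E)
    have h2 := pyth a
    nlinarith [h, h2]
  -- key upper bound on the projection norm
  have key : ∀ a ∈ U, ‖a‖ = ρ → ‖(V.orthogonalProjection a : E)‖ ≤ ρ * c := by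
    intro a haU han
    set p : E := (V.orthogonalProjection a : E) with hp
    rcases eq_or_ne p 0 with hp0 | hp0
    · rw [hp0, norm_zero]
      exact mul_nonneg hρ.le hc0
    · have hpV : p ∈ V := (V.orthogonalProjection a).2
      have hpn : (0:ℝ) < ‖p‖ := norm_pos_iff.mpr hp0
      have hmemT : ⟪ρ⁻¹ • a, ‖p‖⁻¹ • p⟫ ∈ T := by
        refine ⟨ρ⁻¹ • a, U.smul_mem _ haU, ‖p‖⁻¹ • p, V.smul_mem _ hpV, ?_, ?_, rfl⟩
        · rw [norm_smul, norm_inv, Real.norm_eq_abs, abs_of_pos hρ, han,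
            inv_mul_cancel₀ hρ.ne']
        · rw [norm_smul, norm_inv, norm_norm, inv_mul_cancel₀ hpn.ne']
      have hval : ⟪ρ⁻¹ • a, ‖p‖⁻¹ • p⟫ = ρ⁻¹ * ‖p‖ := by
        rw [real_inner_smul_left, real_inner_smul_right, pyth a, ← hp]
        field_simp
      have := hle _ hmemT
      rw [hval] at this
      calc ‖p‖ = ρ * (ρ⁻¹ * ‖p‖) := by field_simp
        _ ≤ ρ * c := by exact mul_le_mul_of_nonneg_left this hρ.le
  -- lower bound on the objective
  set S : Set ℝ :=
    {y : ℝ | ∃ a ∈ U, ‖a‖ = ρ ∧ y = ‖a - (V.orthogonalProjection a : E)‖ ^ 2} with hSdef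
  have hlow : ∀ y ∈ S, ρ ^ 2 * (1 - c ^ 2) ≤ y := by
    rintro y ⟨a, haU, han, rfl⟩
    rw [normsub a, han]
    have h1 := key a haU han
    have h2 : (0:ℝ) ≤ ‖(V.orthogonalProjection a : E)‖ := norm_nonneg _
    nlinarith
  -- the witness a₀ = ρ • u₀
  have ha₀U : (ρ • u₀ : E) ∈ U := U.smul_mem _ hu₀U
  have ha₀n : ‖(ρ • u₀ : E)‖ = ρ := by
    rw [norm_smul, Real.norm_eq_abs, abs_of_pos hρ, hu₀1, mul_one]
  have hwit : ‖(ρ • u₀ : E) - (V.orthogonalProjection (ρ • u₀) : E)‖ ^ 2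
      ≤ ρ ^ 2 * (1 - c ^ 2) := by
    set a₀ : E := (ρ • u₀ : E) with ha₀
    set p₀ : E := (V.orthogonalProjection a₀ : E) with hp₀
    have hiv : ⟪a₀, v₀⟫ = ρ * c := by
      rw [ha₀, real_inner_smul_left, hcv]
    have hov : ⟪a₀ - p₀, v₀⟫ = 0 := by
      have hmem : a₀ - p₀ ∈ Vᗮ := Submodule.sub_starProjection_mem_orthogonal (K := V) a₀
      have := (Submodule.mem_orthogonal V (a₀ - p₀)).mp hmem v₀ hv₀V
      rw [real_inner_comm] at this
      exact this
    have hpv : ⟪p₀, v₀⟫ = ρ * c := by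
      have : ⟪a₀, v₀⟫ - ⟪p₀, v₀⟫ = 0 := by rw [← inner_sub_left]; exact hov
      linarith [hiv]
    have hcs : ρ * c ≤ ‖p₀‖ := by
      have := real_inner_le_norm p₀ v₀
      rw [hpv, hv₀1, mul_one] at this
      exact this
    have hrc : (0:ℝ) ≤ ρ * c := mul_nonneg hρ.le hc0
    rw [normsub a₀, ha₀n]
    nlinarith
  have hmemS : ρ ^ 2 * (1 - c ^ 2) ∈ S := by
    have h1 : ‖(ρ • u₀ : E) - (V.orthogonalProjection (ρ • u₀) : E)‖ ^ 2 ∈ S :=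
      ⟨ρ • u₀, ha₀U, ha₀n, rfl⟩
    have h2 := hlow _ h1
    have h3 : ‖(ρ • u₀ : E) - (V.orthogonalProjection (ρ • u₀) : E)‖ ^ 2
        = ρ ^ 2 * (1 - c ^ 2) := le_antisymm hwit h2
    rwa [h3] at h1
  exact IsLeast.csInf_eq ⟨hmemS, hlow⟩
end

section
/- Let U and V be nonzero subspaces of a finite-dimensional real inner product space, with orthogonal projections P_U and P_V. Then the operator norm of the composition P_U ∘ P_V equals sup{⟨u, v⟩ : u ∈ U, v ∈ V, ‖u‖ = ‖v‖ = 1}, i.e., ‖P_U P_V‖ = cos θ₁, the cosine of the minimal principal angle between U and V. -/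
open scoped RealInnerProductSpace

/-- For nonzero subspaces `U, V` of a finite-dimensional real inner product
space with orthogonal projections `P_U, P_V`, the operator norm of `P_U ∘ P_V` equals
`sup{⟪u,v⟫ : u ∈ U, v ∈ V, ‖u‖ = ‖v‖ = 1}`, the cosine of the minimal principal angle. -/
theorem opNorm_proj_comp_proj (E : Type*) [NormedAddCommGroup E] [InnerProductSpace ℝ E]
    [FiniteDimensional ℝ E] (U V : Submodule ℝ E) (hU : U ≠ ⊥) (hV : V ≠ ⊥) :
    ‖(U.subtypeL.comp U.orthogonalProjectionOnto).comp
        (V.subtypeL.comp V.orthogonalProjectionOnto)‖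
      = sSup {x : ℝ | ∃ u ∈ U, ∃ v ∈ V, ‖u‖ = 1 ∧ ‖v‖ = 1 ∧ ⟪u, v⟫ = x} := by
  set T := (U.subtypeL.comp U.orthogonalProjectionOnto).comp
        (V.subtypeL.comp V.orthogonalProjectionOnto) with hTdef
  set S := {x : ℝ | ∃ u ∈ U, ∃ v ∈ V, ‖u‖ = 1 ∧ ‖v‖ = 1 ∧ ⟪u, v⟫ = x} with hSdef
  have hT : ∀ x : E, T x = ↑(U.orthogonalProjectionOnto ↑(V.orthogonalProjectionOnto x)) :=
    fun x => rfl
  have hunit : ∀ y : E, y ≠ 0 → ‖(‖y‖⁻¹ : ℝ) • y‖ = 1 := fun y hy => by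
    rw [norm_smul, norm_inv, norm_norm, inv_mul_cancel₀ (norm_ne_zero_iff.mpr hy)]
  obtain ⟨u₀, hu₀U, hu₀⟩ := Submodule.exists_mem_ne_zero_of_ne_bot hU
  obtain ⟨v₀, hv₀V, hv₀⟩ := Submodule.exists_mem_ne_zero_of_ne_bot hV
  set t₀ : ℝ := ⟪(‖u₀‖⁻¹ : ℝ) • u₀, (‖v₀‖⁻¹ : ℝ) • v₀⟫ with ht₀
  have hmem0 : t₀ ∈ S :=
    ⟨_, U.smul_mem _ hu₀U, _, V.smul_mem _ hv₀V,
      hunit _ hu₀, hunit _ hv₀, rfl⟩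
  have hmem0' : -t₀ ∈ S :=
    ⟨-((‖u₀‖⁻¹ : ℝ) • u₀), U.neg_mem (U.smul_mem _ hu₀U), _, V.smul_mem _ hv₀V,
      by rw [norm_neg]; exact hunit _ hu₀, hunit _ hv₀,
      by rw [inner_neg_left]⟩
  -- every element of S is at most ‖T‖
  have hub : ∀ x ∈ S, x ≤ ‖T‖ := by
    rintro x ⟨u, hu, v, hv, hnu, hnv, rfl⟩
    have h1 : T v = ↑(U.orthogonalProjectionOnto v) := by
      rw [hT, ← V.starProjection_apply, V.starProjection_eq_self_iff.mpr hv]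
    have h2 : ⟪u, v⟫ = ⟪u, T v⟫ := by
      rw [h1, ← U.starProjection_apply, ← U.inner_starProjection_left_eq_right,
        U.starProjection_eq_self_iff.mpr hu]
    calc ⟪u, v⟫ = ⟪u, T v⟫ := h2
      _ ≤ ‖u‖ * ‖T v‖ := real_inner_le_norm _ _
      _ ≤ 1 * (‖T‖ * ‖v‖) := by
          rw [hnu, one_mul, one_mul]; exact T.le_opNorm v
      _ = ‖T‖ := by rw [hnv]; ring
  have hbdd : BddAbove S := ⟨‖T‖, hub⟩
  have hSnonneg : 0 ≤ sSup S := by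
    rcases le_total 0 t₀ with h | h
    · exact h.trans (le_csSup hbdd hmem0)
    · exact (neg_nonneg.mpr h).trans (le_csSup hbdd hmem0')
  refine le_antisymm (T.opNorm_le_bound hSnonneg fun x => ?_) (Real.sSup_le hub (norm_nonneg T))
  by_cases hw : T x = 0
  · rw [hw, norm_zero]; positivity
  · set w : E := T x with hwdef
    have hwU : w ∈ U := by rw [hwdef, hT]; exact Submodule.coe_mem _
    set v' : E := ↑(V.orthogonalProjectionOnto x) with hv'def
    have hv'V : v' ∈ V := Submodule.coe_mem _
    have hv' : v' ≠ 0 := by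
      intro h
      apply hw
      rw [hwdef, hT, ← hv'def, h]
      simp
    set u : E := (‖w‖⁻¹ : ℝ) • w with hudef
    set v : E := (‖v'‖⁻¹ : ℝ) • v' with hvdef
    have huU : u ∈ U := U.smul_mem _ hwU
    have hvV : v ∈ V := V.smul_mem _ hv'V
    have hnu : ‖u‖ = 1 := hunit _ hw
    have hnv : ‖v‖ = 1 := hunit _ hv'
    have hmem : ⟪u, v⟫ ∈ S := ⟨u, huU, v, hvV, hnu, hnv, rfl⟩
    have hv'ne : ‖v'‖ ≠ 0 := norm_ne_zero_iff.mpr hv'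
    have hwne : ‖w‖ ≠ 0 := norm_ne_zero_iff.mpr hw
    have key : ‖T x‖ = ‖v'‖ * ⟪u, v⟫ := by
      have h1 : ⟪u, T x⟫ = ‖w‖ := by
        rw [hudef, ← hwdef, real_inner_smul_left, real_inner_self_eq_norm_sq, sq,
          ← mul_assoc, inv_mul_cancel₀ hwne, one_mul]
      have h2 : ⟪u, T x⟫ = ⟪u, v'⟫ := by
        rw [hT, ← hv'def, ← U.starProjection_apply, ← U.inner_starProjection_left_eq_right,
          U.starProjection_eq_self_iff.mpr huU]
      have h3 : ‖v'‖ * ⟪u, v⟫ = ⟪u, v'⟫ := by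
        rw [hvdef, real_inner_smul_right, ← mul_assoc, mul_inv_cancel₀ hv'ne, one_mul]
      rw [show ‖T x‖ = ‖w‖ from by rw [hwdef], ← h1, h2, h3]
    have hposw : 0 < ‖w‖ := norm_pos_iff.mpr hw
    have hposv' : 0 < ‖v'‖ := norm_pos_iff.mpr hv'
    have hinnerpos : 0 < ⟪u, v⟫ := by
      by_contra h
      push_neg at h
      have h4 : ‖v'‖ * ⟪u, v⟫ ≤ 0 := mul_nonpos_of_nonneg_of_nonpos hposv'.le h
      rw [← key] at h4
      have : (0 : ℝ) < ‖T x‖ := by rw [show ‖T x‖ = ‖w‖ from by rw [hwdef]]; exact hposw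
      linarith
    have hv'x : ‖v'‖ ≤ ‖x‖ := by
      calc ‖v'‖ = ‖V.orthogonalProjectionOnto x‖ := rfl
        _ ≤ ‖V.orthogonalProjectionOnto‖ * ‖x‖ := (V.orthogonalProjectionOnto).le_opNorm x
        _ ≤ 1 * ‖x‖ := by
            gcongr
            exact V.orthogonalProjectionOnto_norm_le
        _ = ‖x‖ := one_mul _
    calc ‖T x‖ = ‖v'‖ * ⟪u, v⟫ := key
      _ ≤ ‖x‖ * sSup S := mul_le_mul hv'x (le_csSup hbdd hmem) hinnerpos.le (norm_nonneg x)
      _ = sSup S * ‖x‖ := mul_comm _ _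
end

section
/- Let U and V be subspaces of a finite-dimensional real inner product space, let W = U ∩ V, and let U ⊖ W = U ∩ W^⊥ and V ⊖ W = V ∩ W^⊥ denote the orthogonal complements of W inside U and V respectively. Then the orthogonal projections satisfy P_U ∘ P_V = P_W + P_{U⊖W} ∘ P_{V⊖W}; equivalently, P_U P_V − P_{U∩V} = P_{U⊖W} P_{V⊖W}. -/
open Submodule

private lemma proj_decomp {E : Type*} [NormedAddCommGroup E] [InnerProductSpace ℝ E]
    [FiniteDimensional ℝ E] (V W : Submodule ℝ E) (h : W ≤ V) (x : E) :
    (orthogonalProjection V x : E)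
      = (orthogonalProjection W x : E) + (orthogonalProjection (V ⊓ Wᗮ) x : E) := by
  apply eq_starProjection_of_mem_of_inner_eq_zero
  · exact V.add_mem (h (orthogonalProjection W x).2)
      (Submodule.mem_inf.1 (orthogonalProjection (V ⊓ Wᗮ) x).2).1
  · intro v hv
    rw [← Submodule.sup_orthogonal_inf_of_hasOrthogonalProjection h, Submodule.mem_sup] at hv
    obtain ⟨w, hw, w', hw', rfl⟩ := hv
    have hw'V : w' ∈ V ⊓ Wᗮ := by rw [inf_comm]; exact hw'
    have h1 : (inner ℝ (x - orthogonalProjection W x : E) w : ℝ) = 0 :=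
      starProjection_inner_eq_zero x w hw
    have h2 : (inner ℝ ((orthogonalProjection (V ⊓ Wᗮ) x : E)) w : ℝ) = 0 := by
      rw [real_inner_comm]
      exact (Submodule.mem_orthogonal W _).1
        (Submodule.mem_inf.1 (orthogonalProjection (V ⊓ Wᗮ) x).2).2 w hw
    have h3 : (inner ℝ (x - orthogonalProjection (V ⊓ Wᗮ) x : E) w' : ℝ) = 0 :=
      starProjection_inner_eq_zero x w' hw'V
    have h4 : (inner ℝ ((orthogonalProjection W x : E)) w' : ℝ) = 0 :=
      (Submodule.mem_orthogonal W w').1 (Submodule.mem_inf.1 hw'V).2 _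
        (orthogonalProjection W x).2
    have hrw : x - ((orthogonalProjection W x : E) + (orthogonalProjection (V ⊓ Wᗮ) x : E))
        = (x - orthogonalProjection W x) - orthogonalProjection (V ⊓ Wᗮ) x :=
      sub_add_eq_sub_sub _ _ _
    rw [hrw, inner_add_right]
    simp only [inner_sub_left] at h1 h3 ⊢
    linarith

/-- For subspaces `U, V` of a finite-dimensional real inner product space,
with `W = U ⊓ V`, `U ⊖ W = U ⊓ Wᗮ` and `V ⊖ W = V ⊓ Wᗮ`, the orthogonal projections satisfy
`P_U ∘ P_V = P_W + P_{U⊖W} ∘ P_{V⊖W}`. -/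
theorem proj_comp_proj_decomposition (E : Type*) [NormedAddCommGroup E]
    [InnerProductSpace ℝ E] [FiniteDimensional ℝ E]
    (U V W : Submodule ℝ E) (hW : W = U ⊓ V) :
    (U.subtypeL.comp (Submodule.orthogonalProjectionOnto U)).comp
        (V.subtypeL.comp (Submodule.orthogonalProjectionOnto V))
      = W.subtypeL.comp (Submodule.orthogonalProjectionOnto W)
        + ((U ⊓ Wᗮ).subtypeL.comp (Submodule.orthogonalProjectionOnto (U ⊓ Wᗮ))).comp
            ((V ⊓ Wᗮ).subtypeL.comp (Submodule.orthogonalProjectionOnto (V ⊓ Wᗮ))) := by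
  have hWU : W ≤ U := hW ▸ inf_le_left
  have hWV : W ≤ V := hW ▸ inf_le_right
  ext x
  simp only [ContinuousLinearMap.comp_apply, ContinuousLinearMap.add_apply,
    Submodule.subtypeL_apply]
  rw [proj_decomp V W hWV x]
  set y : E := (orthogonalProjection (V ⊓ Wᗮ) x : E) with hy
  have hyW : y ∈ Wᗮ := (Submodule.mem_inf.1 (orthogonalProjection (V ⊓ Wᗮ) x).2).2
  have hmem : (orthogonalProjection W x : E) ∈ U := hWU (orthogonalProjection W x).2
  have step : (orthogonalProjection U ((orthogonalProjection W x : E) + y) : E)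
      = (orthogonalProjection W x : E) + (orthogonalProjection U y : E) := by
    rw [map_add, Submodule.coe_add, (by exact starProjection_eq_self_iff.2 hmem :
      ((orthogonalProjection U) (orthogonalProjection W x : E) : E) = (orthogonalProjection W x : E))]
  rw [step, proj_decomp U W hWU y,
    Submodule.orthogonalProjectionOnto_apply_of_mem_orthogonal hyW]
  simp
end

section
/- Let U and V be subspaces of ℝ^p with orthogonal projection matrices P_U and P_V, and let W = U ∩ V with k = dim W and orthogonal projection matrix P_W. Then the squared Frobenius norm satisfies ‖P_U P_V‖_F² ≥ k + ‖P_U P_V − P_W‖², where ‖·‖ is the spectral (operator) norm; hence the Frobenius norm objective upper-bounds the cosine of the smallest nonzero principal angle between U and V. -/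
open Matrix


private lemma opNorm_sq_le_frobenius_sq {p : ℕ} (B : Matrix (Fin p) (Fin p) ℝ) :
    ‖Matrix.toEuclideanCLM (𝕜 := ℝ) B‖ ^ 2 ≤ ∑ i, ∑ j, (B i j) ^ 2 := by
  set S : ℝ := ∑ i, ∑ j, (B i j) ^ 2 with hSdef
  have hS0 : 0 ≤ S := by positivity
  have hb : ‖Matrix.toEuclideanCLM (𝕜 := ℝ) B‖ ≤ Real.sqrt S := by
    apply ContinuousLinearMap.opNorm_le_bound _ (Real.sqrt_nonneg S)
    intro x
    have hentry : ∀ i, (Matrix.toEuclideanCLM (𝕜 := ℝ) B x) i = ∑ j, B i j * x j := by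
      intro i; rfl
    have hnorm : ‖Matrix.toEuclideanCLM (𝕜 := ℝ) B x‖ ^ 2
        = ∑ i, (∑ j, B i j * x j) ^ 2 := by
      rw [EuclideanSpace.norm_eq, Real.sq_sqrt (by positivity)]
      exact Finset.sum_congr rfl fun i _ => by rw [Real.norm_eq_abs, sq_abs, hentry]
    have hxsq : ‖x‖ ^ 2 = ∑ j, (x j) ^ 2 := by
      rw [EuclideanSpace.norm_eq, Real.sq_sqrt (by positivity)]
      exact Finset.sum_congr rfl fun j _ => by rw [Real.norm_eq_abs, sq_abs]
    have hx2 : ‖Matrix.toEuclideanCLM (𝕜 := ℝ) B x‖ ^ 2 ≤ S * ‖x‖ ^ 2 := by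
      rw [hnorm, hxsq, hSdef, Finset.sum_mul]
      refine Finset.sum_le_sum fun i _ => ?_
      exact Finset.sum_mul_sq_le_sq_mul_sq _ _ _
    have h0 : (0:ℝ) ≤ Real.sqrt S * ‖x‖ := by positivity
    refine le_of_pow_le_pow_left₀ two_ne_zero h0 ?_
    calc ‖Matrix.toEuclideanCLM (𝕜 := ℝ) B x‖ ^ 2 ≤ S * ‖x‖ ^ 2 := hx2
      _ = (Real.sqrt S * ‖x‖) ^ 2 := by rw [mul_pow, Real.sq_sqrt hS0]
  calc ‖Matrix.toEuclideanCLM (𝕜 := ℝ) B‖ ^ 2 ≤ (Real.sqrt S) ^ 2 :=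
        pow_le_pow_left₀ (norm_nonneg _) hb 2
    _ = S := Real.sq_sqrt hS0

/-- For subspaces `U, V` of `ℝ^p` with orthogonal projection matrices
`P_U, P_V`, and `W = U ⊓ V` with `k = dim W` and projection matrix `P_W`:
`‖P_U P_V‖_F² ≥ k + ‖P_U P_V − P_W‖²`, where `‖·‖_F` is the Frobenius norm (squared Frobenius
norm = sum of squared entries) and `‖·‖` the spectral (operator) norm. -/
theorem frobenius_sq_ge_dim_add_spectral_sq (p : ℕ)
    (U V W : Submodule ℝ (EuclideanSpace ℝ (Fin p))) (hW : W = U ⊓ V)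
    (k : ℕ) (hk : k = Module.finrank ℝ W)
    (PU PV PW : Matrix (Fin p) (Fin p) ℝ)
    (hPU : Matrix.toEuclideanCLM (𝕜 := ℝ) PU
      = U.subtypeL.comp (U.orthogonalProjection))
    (hPV : Matrix.toEuclideanCLM (𝕜 := ℝ) PV
      = V.subtypeL.comp (V.orthogonalProjection))
    (hPW : Matrix.toEuclideanCLM (𝕜 := ℝ) PW
      = W.subtypeL.comp (W.orthogonalProjection)) :
    (k : ℝ) + ‖Matrix.toEuclideanCLM (𝕜 := ℝ) (PU * PV - PW)‖ ^ 2
      ≤ ∑ i, ∑ j, ((PU * PV) i j) ^ 2 := by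
  have hWU : W ≤ U := hW ▸ inf_le_left
  have hWV : W ≤ V := hW ▸ inf_le_right
  -- product identities
  have hprod : ∀ (X : Submodule ℝ (EuclideanSpace ℝ (Fin p)))
      (PX : Matrix (Fin p) (Fin p) ℝ),
      Matrix.toEuclideanCLM (𝕜 := ℝ) PX = X.subtypeL.comp (X.orthogonalProjection) →
      W ≤ X → PX * PW = PW := by
    intro X PX hPX hWX
    apply EquivLike.injective (Matrix.toEuclideanCLM (𝕜 := ℝ) (n := Fin p))
    rw [_root_.map_mul, hPX, hPW]
    refine ContinuousLinearMap.ext fun x => ?_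
    simp only [ContinuousLinearMap.mul_apply, ContinuousLinearMap.comp_apply,
      Submodule.subtypeL_apply]
    exact Submodule.starProjection_eq_self_iff.mpr (hWX (SetLike.coe_mem _))
  have hUW : PU * PW = PW := hprod U PU hPU hWU
  have hVW : PV * PW = PW := hprod V PV hPV hWV
  have hWW : PW * PW = PW := hprod W PW hPW le_rfl
  -- symmetry of PW
  have hstarW : star PW = PW := by
    apply EquivLike.injective (Matrix.toEuclideanCLM (𝕜 := ℝ) (n := Fin p))
    rw [map_star, hPW]
    exact isSelfAdjoint_starProjection W
  have hsymm : ∀ i j, PW i j = PW j i := by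
    intro i j
    conv_lhs => rw [← hstarW]
    simp [Matrix.star_eq_conjTranspose, Matrix.conjTranspose_apply]
  -- trace of PW is k
  have hproj : LinearMap.IsProj W (Matrix.toEuclideanLin PW) := by
    constructor
    · intro x
      have : Matrix.toEuclideanLin PW x = Matrix.toEuclideanCLM (𝕜 := ℝ) PW x := rfl
      rw [this, hPW]
      exact SetLike.coe_mem _
    · intro x hx
      have : Matrix.toEuclideanLin PW x = Matrix.toEuclideanCLM (𝕜 := ℝ) PW x := rfl
      rw [this, hPW]
      exact Submodule.starProjection_eq_self_iff.mpr hx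
  have htr : Matrix.trace PW = (k : ℝ) := by
    have h1 := hproj.trace
    rw [LinearMap.trace_eq_matrix_trace ℝ (PiLp.basisFun 2 ℝ (Fin p))] at h1
    have h2 : LinearMap.toMatrix (PiLp.basisFun 2 ℝ (Fin p)) (PiLp.basisFun 2 ℝ (Fin p))
        (Matrix.toEuclideanLin PW) = PW := by
      rw [Matrix.toEuclideanLin_eq_toLin]
      exact LinearMap.toMatrix_toLin _ _ _
    rw [h2] at h1
    rw [h1, hk]
  -- cross term vanishes
  have hCPW : (PU * PV - PW) * PW = 0 := by
    rw [sub_mul, mul_assoc, hVW, hUW, hWW, sub_self]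
  have hcross : ∑ i, ∑ j, (PU * PV - PW) i j * PW i j = 0 := by
    have : ∑ i, ∑ j, (PU * PV - PW) i j * PW i j = Matrix.trace ((PU * PV - PW) * PW) := by
      simp only [Matrix.trace, Matrix.diag, Matrix.mul_apply]
      exact Finset.sum_congr rfl fun i _ => Finset.sum_congr rfl fun j _ => by
        rw [hsymm i j]
    rw [this, hCPW, Matrix.trace_zero]
  -- squared Frobenius norm of PW is k
  have hPWsq : ∑ i, ∑ j, (PW i j) ^ 2 = (k : ℝ) := by
    have : ∑ i, ∑ j, (PW i j) ^ 2 = Matrix.trace (PW * PW) := by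
      simp only [Matrix.trace, Matrix.diag, Matrix.mul_apply]
      exact Finset.sum_congr rfl fun i _ => Finset.sum_congr rfl fun j _ => by
        rw [sq, hsymm i j]
    rw [this, hWW, htr]
  -- expansion
  have key : ∑ i, ∑ j, ((PU * PV) i j) ^ 2
      = (∑ i, ∑ j, ((PU * PV - PW) i j) ^ 2) + (k : ℝ) := by
    calc ∑ i, ∑ j, ((PU * PV) i j) ^ 2
        = ∑ i, ∑ j, (((PU * PV - PW) i j) ^ 2
            + 2 * ((PU * PV - PW) i j * PW i j) + (PW i j) ^ 2) := by
          refine Finset.sum_congr rfl fun i _ => Finset.sum_congr rfl fun j _ => ?_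
          have h : (PU * PV) i j = (PU * PV - PW) i j + PW i j := by
            simp [Matrix.sub_apply]
          rw [h]; ring
      _ = (∑ i, ∑ j, ((PU * PV - PW) i j) ^ 2)
            + 2 * (∑ i, ∑ j, (PU * PV - PW) i j * PW i j)
            + (∑ i, ∑ j, (PW i j) ^ 2) := by
          simp [Finset.sum_add_distrib, Finset.mul_sum]
      _ = (∑ i, ∑ j, ((PU * PV - PW) i j) ^ 2) + (k : ℝ) := by
          rw [hcross, hPWsq]; ring
  have hfin := opNorm_sq_le_frobenius_sq (PU * PV - PW)
  linarith
end
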